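/- Let 1 ≤ i ≤ m. Then u_m divides 𝒫^{e(i,m)}(u_m) in S, and every d ∈ S with u_m·d = 𝒫^{e(i,m)}(u_m) is G-invariant: d·g = d for all g ∈ G. -/

import Mathlib

open MvPolynomial

noncomputable section

namespace OPlus

variable (F : Type) [Field F] [Fintype F]

/-- The variable `y_{j+1}` (1-based `y_1,…,y_m`) among the `2m` variables
`(y_1,…,y_m,x_m,…,x_1)`. -/
def yvar (m : ℕ) (j : Fin m) : Fin (2*m) :=
  ⟨j.val, by have := j.isLt; omega⟩

/-- The variable `x_{j+1}` (1-based `x_1,…,x_m`) among the `2m` variables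
`(y_1,…,y_m,x_m,…,x_1)`. -/
def xvar (m : ℕ) (j : Fin m) : Fin (2*m) :=
  ⟨2*m - 1 - j.val, by have := j.isLt; omega⟩

/-- The invariants `ξ_i`; `ξ_0 = Σ y_j x_j` and
`ξ_i = Σ (y_j^{q^i} x_j + y_j x_j^{q^i})` for `i > 0`. -/
def xi (m q i : ℕ) : MvPolynomial (Fin (2*m)) F :=
  if i = 0 then ∑ j : Fin m, X (yvar m j) * X (xvar m j)
  else ∑ j : Fin m, (X (yvar m j) ^ q ^ i * X (xvar m j) + X (yvar m j) * X (xvar m j) ^ q ^ i)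

/-- The right action of a matrix on polynomials: each variable is sent to the
corresponding entry of the row vector of variables multiplied by `g` on the right. -/
def act (m : ℕ) (g : Matrix (Fin (2*m)) (Fin (2*m)) F) :
    MvPolynomial (Fin (2*m)) F →ₐ[F] MvPolynomial (Fin (2*m)) F :=
  aeval (fun i => ∑ k : Fin (2*m), C (g k i) * X k)

/-- The orthogonal group `O⁺_{2m}(q)` of plus type, as a set of matrices. -/
def Gset (m q : ℕ) : Set (Matrix (Fin (2*m)) (Fin (2*m)) F) :=
  {g | IsUnit g ∧ act F m g (xi F m q 0) = xi F m q 0}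

/-- The Sylow `p`-subgroup `P` of `G`: upper-triangular unipotent elements. -/
def Pset (m q : ℕ) : Set (Matrix (Fin (2*m)) (Fin (2*m)) F) :=
  {g | g ∈ Gset F m q ∧ (∀ i j : Fin (2*m), j < i → g i j = 0) ∧ ∀ i, g i i = 1}

/-- `N(v)`: the product of the distinct elements of the `P`-orbit of `v`. -/
def Norb (m q : ℕ) (v : MvPolynomial (Fin (2*m)) F) : MvPolynomial (Fin (2*m)) F :=
  ∏ᶠ w ∈ {w | ∃ g ∈ Pset F m q, act F m g v = w}, w

/-- `u_m = ∏_{j=1}^m N(y_j) N(x_j)`. -/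
def uPoly (m q : ℕ) : MvPolynomial (Fin (2*m)) F :=
  ∏ j : Fin m, (Norb F m q (X (yvar m j)) * Norb F m q (X (xvar m j)))

/-- The complete Steenrod operator `𝒫(t) : S → S[t]`, `v ↦ v + v^q t` on linear forms. -/
def steenrod (m q : ℕ) :
    MvPolynomial (Fin (2*m)) F →ₐ[F] Polynomial (MvPolynomial (Fin (2*m)) F) :=
  aeval (fun i => Polynomial.C (X i) + Polynomial.C (X i ^ q) * Polynomial.X)

/-- The Steenrod operation `𝒫^i(f)`: the coefficient of `t^i` in `𝒫(t)(f)`. -/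
def sP (m q i : ℕ) (f : MvPolynomial (Fin (2*m)) F) : MvPolynomial (Fin (2*m)) F :=
  (steenrod F m q f).coeff i

/-- `e(i,m) = Σ_{j=1}^i q^{2m-1-j}`. -/
def eExp (m q i : ℕ) : ℕ := ∑ j ∈ Finset.Icc 1 i, q ^ (2*m - 1 - j)

/-- `ψ : S → S[t]`, `v ↦ v^q − v t^{q−1}` on linear forms. -/
def psi (m q : ℕ) :
    MvPolynomial (Fin (2*m)) F →ₐ[F] Polynomial (MvPolynomial (Fin (2*m)) F) :=
  aeval (fun i => Polynomial.C (X i ^ q) - Polynomial.C (X i) * Polynomial.X ^ (q-1))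

end OPlus

open OPlus

-- ===================== auxiliary development =====================
section Aux

open OPlus Finset Matrix

open scoped Classical
set_option linter.unusedSectionVars false

variable {F : Type} [Field F] [Fintype F] {m : ℕ}

/-- the involution `k ↦ 2m-1-k` pairing `y_j` with `x_j`. -/
def bbar (m : ℕ) (k : Fin (2*m)) : Fin (2*m) :=
  ⟨2*m - 1 - k.val, by have := k.isLt; omega⟩

lemma bbar_bbar (k : Fin (2*m)) : bbar m (bbar m k) = k := by
  have := k.isLt
  apply Fin.ext
  simp only [bbar]
  omega

lemma bbar_ne (k : Fin (2*m)) : bbar m k ≠ k := by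
  intro h
  have h1 := congrArg Fin.val h
  have := k.isLt
  simp only [bbar] at h1
  omega

lemma bbar_eq_iff {a b : Fin (2*m)} : bbar m a = b ↔ a = bbar m b := by
  constructor
  · rintro rfl; rw [bbar_bbar]
  · rintro rfl; rw [bbar_bbar]

lemma bbar_yvar (j : Fin m) : bbar m (yvar m j) = xvar m j := rfl

lemma bbar_xvar (j : Fin m) : bbar m (xvar m j) = yvar m j := by
  apply Fin.ext
  have := j.isLt
  simp only [bbar, xvar, yvar]
  omega

/-- The Gram matrix of the bilinear form of `ξ₀`. -/
def Amat (F : Type) [Field F] (m : ℕ) : Matrix (Fin (2*m)) (Fin (2*m)) F :=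
  Matrix.of fun k l => if l = bbar m k then 1 else 0

lemma Amat_apply (k l : Fin (2*m)) :
    Amat F m k l = if l = bbar m k then (1:F) else 0 := rfl

lemma Amat_transpose : (Amat F m)ᵀ = Amat F m := by
  ext k l
  rw [Matrix.transpose_apply, Amat_apply, Amat_apply]
  by_cases h : l = bbar m k
  · rw [if_pos (show k = bbar m l by rw [h, bbar_bbar]), if_pos h]
  · rw [if_neg (fun hk => h (by rw [hk, bbar_bbar])), if_neg h]

lemma Amat_mul_Amat : Amat F m * Amat F m = 1 := by
  ext k l
  rw [Matrix.mul_apply]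
  simp only [Amat_apply]
  rw [Finset.sum_eq_single (bbar m k)]
  · rw [if_pos rfl, one_mul, Matrix.one_apply]
    by_cases h : l = bbar m (bbar m k)
    · rw [if_pos h, if_pos]; rw [h, bbar_bbar]
    · rw [if_neg h, if_neg]; intro hh; exact h (by rw [hh, bbar_bbar])
  · intro b _ hb; rw [if_neg hb, zero_mul]
  · intro h; exact absurd (mem_univ _) h

/-- The bilinear form. -/
def Bf (u w : Fin (2*m) → F) : F := ∑ a, u a * w (bbar m a)

lemma Amat_mulVec (w : Fin (2*m) → F) (a : Fin (2*m)) :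
    (Amat F m).mulVec w a = w (bbar m a) := by
  simp only [Matrix.mulVec, dotProduct, Amat_apply, ite_mul, one_mul, zero_mul]
  rw [Finset.sum_ite_eq' univ (bbar m a) w]
  simp

lemma Bf_eq_dot (u w : Fin (2*m) → F) :
    Bf u w = dotProduct u ((Amat F m).mulVec w) := by
  unfold Bf dotProduct
  exact Finset.sum_congr rfl fun a _ => by rw [Amat_mulVec]

/-- `linform v = ∑ v_k X_k`. -/
def linform (v : Fin (2*m) → F) : MvPolynomial (Fin (2*m)) F :=
  ∑ k, MvPolynomial.C (v k) * MvPolynomial.X k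

lemma coeff_linform (v : Fin (2*m) → F) (k : Fin (2*m)) :
    MvPolynomial.coeff (Finsupp.single k 1) (linform v) = v k := by
  rw [linform, MvPolynomial.coeff_sum]
  have h : ∀ l : Fin (2*m),
      MvPolynomial.coeff (Finsupp.single k 1) (MvPolynomial.C (v l) * MvPolynomial.X l)
        = if l = k then v l else 0 := by
    intro l
    rw [MvPolynomial.coeff_C_mul, MvPolynomial.coeff_X']
    by_cases h : l = k
    · rw [if_pos h, if_pos, mul_one]
      rw [h]
    · rw [if_neg h, if_neg, mul_zero]
      intro hh
      exact h ((Finsupp.single_left_inj one_ne_zero).mp hh)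
  rw [Finset.sum_congr rfl fun l _ => h l, Finset.sum_ite_eq' univ k v]
  simp

lemma linform_inj : Function.Injective (linform (F := F) (m := m)) := by
  intro v w h
  funext k
  have := congrArg (MvPolynomial.coeff (Finsupp.single k 1)) h
  rwa [coeff_linform, coeff_linform] at this

lemma linform_ne_zero {v : Fin (2*m) → F} (hv : v ≠ 0) : linform v ≠ 0 := by
  intro h
  apply hv
  funext k
  have := congrArg (MvPolynomial.coeff (Finsupp.single k 1)) h
  rwa [coeff_linform, MvPolynomial.coeff_zero] at this

lemma linform_smul (t : F) (v : Fin (2*m) → F) :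
    linform (t • v) = MvPolynomial.C t * linform v := by
  rw [linform, linform, Finset.mul_sum]
  refine Finset.sum_congr rfl fun k _ => ?_
  rw [Pi.smul_apply, smul_eq_mul, MvPolynomial.C_mul, mul_assoc]

lemma act_X (g : Matrix (Fin (2*m)) (Fin (2*m)) F) (i : Fin (2*m)) :
    act F m g (MvPolynomial.X i) = linform (fun k => g k i) := by
  rw [act, MvPolynomial.aeval_X, linform]

lemma act_C (g : Matrix (Fin (2*m)) (Fin (2*m)) F) (a : F) :
    act F m g (MvPolynomial.C a) = MvPolynomial.C a := by
  rw [act, MvPolynomial.aeval_C, MvPolynomial.algebraMap_eq]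

lemma mulVec_apply (g : Matrix (Fin (2*m)) (Fin (2*m)) F) (v : Fin (2*m) → F)
    (a : Fin (2*m)) : g.mulVec v a = ∑ k, g a k * v k := rfl

lemma act_linform (g : Matrix (Fin (2*m)) (Fin (2*m)) F) (v : Fin (2*m) → F) :
    act F m g (linform v) = linform (g.mulVec v) := by
  rw [linform, map_sum]
  have h : ∀ k, act F m g (MvPolynomial.C (v k) * MvPolynomial.X k)
      = ∑ a, MvPolynomial.C (g a k * v k) * MvPolynomial.X a := by
    intro k
    rw [_root_.map_mul, act_C, act_X, linform, Finset.mul_sum]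
    refine Finset.sum_congr rfl fun a _ => ?_
    rw [MvPolynomial.C_mul]; ring
  rw [Finset.sum_congr rfl fun k _ => h k, Finset.sum_comm, linform]
  refine Finset.sum_congr rfl fun a _ => ?_
  rw [_root_.mulVec_apply, map_sum, Finset.sum_mul]

lemma act_act (g h : Matrix (Fin (2*m)) (Fin (2*m)) F) (f : MvPolynomial (Fin (2*m)) F) :
    act F m g (act F m h f) = act F m (g * h) f := by
  have key : (act F m g).comp (act F m h) = act F m (g * h) := by
    apply MvPolynomial.algHom_ext
    intro i
    rw [AlgHom.comp_apply, act_X, act_linform, act_X]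
    refine congrArg linform (funext fun a => ?_)
    rw [_root_.mulVec_apply, Matrix.mul_apply]
  exact DFunLike.congr_fun key f

lemma act_one (f : MvPolynomial (Fin (2*m)) F) : act F m (1 : Matrix _ _ F) f = f := by
  have key : act F m (1 : Matrix (Fin (2*m)) (Fin (2*m)) F) = AlgHom.id F _ := by
    apply MvPolynomial.algHom_ext
    intro i
    rw [act_X, AlgHom.id_apply, linform]
    simp only [Matrix.one_apply, apply_ite MvPolynomial.C, MvPolynomial.C_1, MvPolynomial.C_0,
      ite_mul, one_mul, zero_mul]
    rw [Finset.sum_ite_eq' univ i (fun k => MvPolynomial.X k)]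
    simp
  rw [key, AlgHom.id_apply]

section Steenrod

variable (p : ℕ) (hp : p.Prime) [CharP F p] (q : ℕ) (hq : q = Fintype.card F)

lemma steenrod_X (i : Fin (2*m)) :
    steenrod F m q (MvPolynomial.X i)
      = Polynomial.C (MvPolynomial.X i) + Polynomial.C ((MvPolynomial.X i) ^ q) * Polynomial.X := by
  rw [steenrod, MvPolynomial.aeval_X]

include p hp hq in
lemma linform_pow_q (v : Fin (2*m) → F) :
    (linform v) ^ q = ∑ k, MvPolynomial.C (v k) * (MvPolynomial.X k : MvPolynomial (Fin (2*m)) F) ^ q := by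
  haveI : Fact p.Prime := ⟨hp⟩
  obtain ⟨s, -, hcard⟩ := FiniteField.card F p
  subst hq
  rw [hcard, linform, sum_pow_char_pow]
  refine Finset.sum_congr rfl fun k _ => ?_
  rw [mul_pow, ← map_pow, ← hcard, FiniteField.pow_card]

lemma steenrod_C (a : F) :
    steenrod F m q (MvPolynomial.C a) = Polynomial.C (MvPolynomial.C a) := by
  rw [steenrod, MvPolynomial.aeval_C, Polynomial.algebraMap_apply, MvPolynomial.algebraMap_eq]

include p hp hq in
lemma steenrod_linform (v : Fin (2*m) → F) :
    steenrod F m q (linform v)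
      = Polynomial.C (linform v) + Polynomial.C ((linform v) ^ q) * Polynomial.X := by
  have h : ∀ k : Fin (2*m), steenrod F m q (MvPolynomial.C (v k) * MvPolynomial.X k)
      = Polynomial.C (MvPolynomial.C (v k) * MvPolynomial.X k)
        + Polynomial.C (MvPolynomial.C (v k) * (MvPolynomial.X k) ^ q) * Polynomial.X := by
    intro k
    rw [_root_.map_mul, steenrod_C, steenrod, MvPolynomial.aeval_X, mul_add, ← Polynomial.C_mul,
      ← mul_assoc, ← Polynomial.C_mul]
  rw [linform, map_sum, Finset.sum_congr rfl fun k _ => h k, Finset.sum_add_distrib,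
    ← map_sum, ← Finset.sum_mul, ← map_sum, ← linform, ← linform_pow_q p hp q hq]

/-- the divisibility property of all Steenrod coefficients. -/
def GoodP (q : ℕ) (f : MvPolynomial (Fin (2*m)) F) : Prop :=
  ∀ e, f ∣ (steenrod F m q f).coeff e

lemma good_mul {f h : MvPolynomial (Fin (2*m)) F} (hf : GoodP q f) (hh : GoodP q h) :
    GoodP q (f * h) := by
  intro e
  rw [_root_.map_mul, Polynomial.coeff_mul]
  exact Finset.dvd_sum fun x _ => mul_dvd_mul (hf x.1) (hh x.2)

lemma good_one : GoodP (F := F) (m := m) q 1 := fun e => one_dvd _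

include p hp hq in
lemma good_linform (v : Fin (2*m) → F) : GoodP q (linform v) := by
  intro e
  rw [steenrod_linform p hp q hq]
  match e with
  | 0 =>
    simp only [Polynomial.coeff_add, Polynomial.coeff_C, if_pos rfl, Polynomial.coeff_C_mul,
      Polynomial.coeff_X_zero, mul_zero, add_zero]
    exact dvd_refl _
  | 1 =>
    simp only [Polynomial.coeff_add, Polynomial.coeff_C, Polynomial.coeff_C_mul,
      Polynomial.coeff_X_one, mul_one, if_neg (one_ne_zero), zero_add]
    exact dvd_pow_self _ (by rw [hq]; exact Fintype.card_ne_zero)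
  | (n+2) =>
    simp only [Polynomial.coeff_add, Polynomial.coeff_C, Polynomial.coeff_C_mul,
      Polynomial.coeff_X]
    simp

include p hp hq in
lemma good_Norb (c : Fin (2*m)) : GoodP q (Norb F m q (MvPolynomial.X c)) := by
  classical
  set s : Set (MvPolynomial (Fin (2*m)) F) :=
    {w | ∃ g ∈ Pset F m q, act F m g (MvPolynomial.X c) = w} with hs_def
  have hs : s.Finite := by
    have hsub : s ⊆ (fun g => act F m g (MvPolynomial.X c)) '' (Pset F m q) := by
      rintro w ⟨g, hg, h⟩; exact ⟨g, hg, h⟩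
    exact Set.Finite.subset ((Set.toFinite (Pset F m q)).image _) hsub
  rw [Norb, finprod_mem_eq_finite_toFinset_prod _ hs]
  refine Finset.prod_induction _ (GoodP q) (fun a b ha hb => good_mul (q := q) ha hb) (good_one q) ?_
  intro w hw
  rw [Set.Finite.mem_toFinset] at hw
  obtain ⟨g, hg, rfl⟩ := hw
  rw [act_X]
  exact good_linform p hp q hq _

include p hp hq in
lemma good_uPoly : GoodP q (uPoly F m q) := by
  rw [uPoly]
  refine Finset.prod_induction _ (GoodP q) (fun a b ha hb => good_mul (q := q) ha hb) (good_one q) ?_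
  intro j _
  exact good_mul (q := q) (good_Norb p hp q hq _) (good_Norb p hp q hq _)

include p hp hq in
lemma steenrod_act (g : Matrix (Fin (2*m)) (Fin (2*m)) F) (f : MvPolynomial (Fin (2*m)) F) :
    steenrod F m q (act F m g f)
      = Polynomial.map (act F m g).toRingHom (steenrod F m q f) := by
  have key : (steenrod F m q).comp (act F m g)
      = (Polynomial.mapAlgHom (act F m g)).comp (steenrod F m q) := by
    apply MvPolynomial.algHom_ext
    intro i
    rw [AlgHom.comp_apply, AlgHom.comp_apply, act_X, steenrod_linform p hp q hq,
      steenrod_X]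
    rw [Polynomial.mapAlgHom]
    simp only [AlgHom.coe_mk, Polynomial.coe_mapRingHom]
    rw [Polynomial.map_add, Polynomial.map_mul, Polynomial.map_C, Polynomial.map_C,
      Polynomial.map_X]
    have hX : (act F m g).toRingHom (MvPolynomial.X i) = linform (fun k => g k i) := act_X g i
    have hX2 : (act F m g).toRingHom (MvPolynomial.X i ^ q) = (linform fun k => g k i) ^ q := by
      rw [_root_.map_pow, hX]
    rw [hX, hX2]
  have := DFunLike.congr_fun key f
  simp only [AlgHom.comp_apply, Polynomial.mapAlgHom, AlgHom.coe_mk,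
    Polynomial.coe_mapRingHom] at this
  exact this

end Steenrod

section Quadratic

/-- `Φ(M) = ∑ M_{kl} X_k X_l`. -/
def Phi (M : Matrix (Fin (2*m)) (Fin (2*m)) F) : MvPolynomial (Fin (2*m)) F :=
  ∑ k, ∑ l, MvPolynomial.C (M k l) * (MvPolynomial.X k * MvPolynomial.X l)

lemma single_add_single_eq {a b k l : Fin (2*m)} :
    (Finsupp.single k 1 + Finsupp.single l 1 : Fin (2*m) →₀ ℕ)
      = Finsupp.single a 1 + Finsupp.single b 1
    ↔ (k = a ∧ l = b) ∨ (k = b ∧ l = a) := by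
  constructor
  · intro h
    by_cases hka : k = a
    · subst hka
      exact Or.inl ⟨rfl, (Finsupp.single_left_inj one_ne_zero).mp (add_left_cancel h)⟩
    · by_cases hla : l = a
      · subst hla
        have h' : (Finsupp.single k 1 + Finsupp.single l 1 : Fin (2*m) →₀ ℕ)
            = Finsupp.single b 1 + Finsupp.single l 1 := by rw [h, add_comm]
        exact Or.inr ⟨(Finsupp.single_left_inj one_ne_zero).mp (add_right_cancel h'), rfl⟩
      · exfalso
        have hval := DFunLike.congr_fun h a
        simp only [Finsupp.add_apply, Finsupp.single_apply] at hval
        by_cases hba : b = a <;> simp [hka, hla, hba] at hval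
  · rintro (⟨rfl, rfl⟩ | ⟨rfl, rfl⟩)
    · rfl
    · rw [add_comm]

lemma double_sum_ite (M : Matrix (Fin (2*m)) (Fin (2*m)) F) (a b : Fin (2*m)) :
    (∑ k, ∑ l, if k = a ∧ l = b then M k l else (0:F)) = M a b := by
  rw [Finset.sum_eq_single a]
  · have h : ∀ l, (if a = a ∧ l = b then M a l else (0:F)) = if l = b then M a l else 0 := by
      intro l
      by_cases hlb : l = b
      · rw [if_pos ⟨rfl, hlb⟩, if_pos hlb]
      · rw [if_neg (fun hh => hlb hh.2), if_neg hlb]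
    rw [Finset.sum_congr rfl fun l _ => h l, Finset.sum_ite_eq' univ b (fun l => M a l)]
    simp
  · intro k _ hk
    exact Finset.sum_eq_zero fun l _ => if_neg (fun hh => hk hh.1)
  · intro h; exact absurd (Finset.mem_univ a) h

lemma coeff_Phi (M : Matrix (Fin (2*m)) (Fin (2*m)) F) (a b : Fin (2*m)) :
    MvPolynomial.coeff (Finsupp.single a 1 + Finsupp.single b 1) (Phi M)
      = if a = b then M a a else M a b + M b a := by
  rw [Phi, MvPolynomial.coeff_sum]
  simp only [MvPolynomial.coeff_sum]
  have hterm : ∀ k l : Fin (2*m),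
      MvPolynomial.coeff (Finsupp.single a 1 + Finsupp.single b 1)
        (MvPolynomial.C (M k l) * (MvPolynomial.X k * MvPolynomial.X l))
      = if (k = a ∧ l = b) ∨ (k = b ∧ l = a) then M k l else 0 := by
    intro k l
    rw [MvPolynomial.coeff_C_mul]
    have hX : (MvPolynomial.X k * MvPolynomial.X l : MvPolynomial (Fin (2*m)) F)
        = MvPolynomial.monomial (Finsupp.single k 1 + Finsupp.single l 1) 1 := by
      rw [MvPolynomial.X, MvPolynomial.X, MvPolynomial.monomial_mul, one_mul]
    rw [hX, MvPolynomial.coeff_monomial]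
    by_cases h : (Finsupp.single k 1 + Finsupp.single l 1 : Fin (2*m) →₀ ℕ)
        = Finsupp.single a 1 + Finsupp.single b 1
    · rw [if_pos h, if_pos (single_add_single_eq.mp h), mul_one]
    · rw [if_neg h, if_neg (fun hh => h (single_add_single_eq.mpr hh)), mul_zero]
  simp only [hterm]
  by_cases hab : a = b
  · subst hab
    rw [if_pos rfl]
    have h : ∀ k l : Fin (2*m),
        (if (k = a ∧ l = a) ∨ (k = a ∧ l = a) then M k l else (0:F))
          = if k = a ∧ l = a then M k l else 0 := by
      intro k l
      by_cases hh : k = a ∧ l = a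
      · rw [if_pos (Or.inl hh), if_pos hh]
      · rw [if_neg (fun c => c.elim hh hh), if_neg hh]
    rw [Finset.sum_congr rfl fun k _ => Finset.sum_congr rfl fun l _ => h k l, double_sum_ite]
  · rw [if_neg hab]
    have h : ∀ k l : Fin (2*m),
        (if (k = a ∧ l = b) ∨ (k = b ∧ l = a) then M k l else (0:F))
          = (if k = a ∧ l = b then M k l else 0) + (if k = b ∧ l = a then M k l else 0) := by
      intro k l
      by_cases h1 : k = a ∧ l = b
      · rw [if_pos (Or.inl h1), if_pos h1, if_neg, add_zero]
        rintro ⟨hkb, hla⟩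
        exact hab (h1.1.symm.trans hkb)
      · by_cases h2 : k = b ∧ l = a
        · rw [if_pos (Or.inr h2), if_neg h1, if_pos h2, zero_add]
        · rw [if_neg (fun hh => hh.elim h1 h2), if_neg h1, if_neg h2, add_zero]
    rw [Finset.sum_congr rfl fun k _ => Finset.sum_congr rfl fun l _ => h k l,
      Finset.sum_congr rfl fun k (_ : k ∈ univ) => Finset.sum_add_distrib,
      Finset.sum_add_distrib, double_sum_ite, double_sum_ite]

lemma Phi_inj (h2 : (2:F) ≠ 0) {M N : Matrix (Fin (2*m)) (Fin (2*m)) F}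
    (hM : Mᵀ = M) (hN : Nᵀ = N) (h : Phi M = Phi N) : M = N := by
  ext a b
  have hc := congrArg (MvPolynomial.coeff (Finsupp.single a 1 + Finsupp.single b 1)) h
  rw [coeff_Phi, coeff_Phi] at hc
  by_cases hab : a = b
  · subst hab; simpa using hc
  · rw [if_neg hab, if_neg hab] at hc
    have hMs : M b a = M a b := by
      have := congrFun (congrFun hM a) b
      rwa [Matrix.transpose_apply] at this
    have hNs : N b a = N a b := by
      have := congrFun (congrFun hN a) b
      rwa [Matrix.transpose_apply] at this
    rw [hMs, hNs, ← two_mul, ← two_mul] at hc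
    exact mul_left_cancel₀ h2 hc

lemma act_Phi (g M : Matrix (Fin (2*m)) (Fin (2*m)) F) :
    act F m g (Phi M) = Phi (g * M * gᵀ) := by
  have lhs_eq : act F m g (Phi M)
      = ∑ k, ∑ l, ∑ a, ∑ b, MvPolynomial.C (g a k * M k l * g b l)
          * (MvPolynomial.X a * MvPolynomial.X b) := by
    rw [Phi, map_sum]
    refine Finset.sum_congr rfl fun k _ => ?_
    rw [map_sum]
    refine Finset.sum_congr rfl fun l _ => ?_
    rw [_root_.map_mul, act_C, _root_.map_mul, act_X, act_X, linform, linform,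
      Finset.sum_mul_sum, Finset.mul_sum]
    refine Finset.sum_congr rfl fun a _ => ?_
    rw [Finset.mul_sum]
    refine Finset.sum_congr rfl fun b _ => ?_
    rw [MvPolynomial.C_mul, MvPolynomial.C_mul]
    ring
  have rhs_eq : Phi (g * M * gᵀ)
      = ∑ a, ∑ b, ∑ k, ∑ l, MvPolynomial.C (g a k * M k l * g b l)
          * (MvPolynomial.X a * MvPolynomial.X b) := by
    rw [Phi]
    refine Finset.sum_congr rfl fun a _ => ?_
    refine Finset.sum_congr rfl fun b _ => ?_
    have hentry : (g * M * gᵀ) a b = ∑ k, ∑ l, g a k * M k l * g b l := by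
      calc (g * M * gᵀ) a b = ∑ j, (∑ k, g a k * M k j) * g b j := by
            rw [Matrix.mul_apply]
            exact Finset.sum_congr rfl fun j _ => by
              rw [Matrix.mul_apply, Matrix.transpose_apply]
        _ = ∑ j, ∑ k, g a k * M k j * g b j :=
            Finset.sum_congr rfl fun j _ => Finset.sum_mul _ _ _
        _ = ∑ k, ∑ j, g a k * M k j * g b j := Finset.sum_comm
    rw [hentry, map_sum MvPolynomial.C _ _, Finset.sum_mul]
    refine Finset.sum_congr rfl fun k _ => ?_
    rw [map_sum MvPolynomial.C _ _, Finset.sum_mul]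
  rw [lhs_eq, rhs_eq]
  rw [Finset.sum_congr rfl fun k (_ : k ∈ univ) => Finset.sum_comm]
  rw [Finset.sum_comm]
  refine Finset.sum_congr rfl fun a _ => ?_
  rw [Finset.sum_congr rfl fun k (_ : k ∈ univ) => Finset.sum_comm]
  rw [Finset.sum_comm]

lemma sum_split {β : Type} [AddCommMonoid β] (f : Fin (2*m) → β) :
    ∑ k, f k = (∑ j : Fin m, f (yvar m j)) + ∑ j : Fin m, f (xvar m j) := by
  have hbij : Function.Bijective (Sum.elim (yvar m) (xvar m)) := by
    constructor
    · rintro (j | j) (j' | j') h <;>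
        (first
          | (have hv := congrArg Fin.val h
             have h1 := j.isLt
             have h2 := j'.isLt
             simp only [Sum.elim_inl, Sum.elim_inr, yvar, xvar] at hv
             first
               | (congr 1; exact Fin.ext (by omega))
               | omega))
    · intro c
      by_cases h : (c : ℕ) < m
      · exact ⟨Sum.inl ⟨c, h⟩, Fin.ext rfl⟩
      · refine ⟨Sum.inr ⟨2*m - 1 - c, by have := c.isLt; omega⟩, Fin.ext ?_⟩
        have := c.isLt
        simp only [Sum.elim_inr, xvar]
        omega
  have hkey := Fintype.sum_bijective _ hbij
    (fun s => f (Sum.elim (yvar m) (xvar m) s)) f (fun s => rfl)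
  rw [← hkey, Fintype.sum_sum_type]
  rfl

lemma xi_zero_eq (h2 : (2:F) ≠ 0) (q : ℕ) :
    xi F m q 0 = MvPolynomial.C (2⁻¹ : F) * Phi (Amat F m) := by
  rw [xi, if_pos rfl]
  have hPhi : Phi (Amat F m) = ∑ k : Fin (2*m), MvPolynomial.X k * MvPolynomial.X (bbar m k) := by
    rw [Phi]
    refine Finset.sum_congr rfl fun k _ => ?_
    simp only [Amat_apply, apply_ite MvPolynomial.C, MvPolynomial.C_1, MvPolynomial.C_0,
      ite_mul, one_mul, zero_mul]
    rw [Finset.sum_ite_eq' univ (bbar m k) (fun l => MvPolynomial.X k * MvPolynomial.X l)]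
    simp
  rw [hPhi, sum_split (β := MvPolynomial (Fin (2*m)) F) (f := fun k => MvPolynomial.X k * MvPolynomial.X (bbar m k))]
  simp only [bbar_yvar, bbar_xvar]
  have hcomm : (∑ j : Fin m, MvPolynomial.X (xvar m j) * MvPolynomial.X (yvar m j)
        : MvPolynomial (Fin (2*m)) F)
      = ∑ j : Fin m, MvPolynomial.X (yvar m j) * MvPolynomial.X (xvar m j) :=
    Finset.sum_congr rfl fun j _ => mul_comm _ _
  rw [hcomm, ← two_mul, show ((2:MvPolynomial (Fin (2*m)) F)) = MvPolynomial.C (2:F) from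
    (map_ofNat MvPolynomial.C 2).symm, ← mul_assoc, ← MvPolynomial.C_mul,
    inv_mul_cancel₀ h2, MvPolynomial.C_1, one_mul]

lemma Gset_rows (h2 : (2:F) ≠ 0) {q : ℕ} {g : Matrix (Fin (2*m)) (Fin (2*m)) F}
    (hg : g ∈ Gset F m q) : g * Amat F m * gᵀ = Amat F m := by
  have hact := hg.2
  rw [xi_zero_eq h2 q, _root_.map_mul, act_C, act_Phi] at hact
  have hC : (MvPolynomial.C (2⁻¹:F) : MvPolynomial (Fin (2*m)) F) ≠ 0 := by
    rw [Ne, MvPolynomial.C_eq_zero]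
    exact inv_ne_zero h2
  have hPhi := mul_left_cancel₀ hC hact
  refine Phi_inj h2 ?_ Amat_transpose hPhi
  rw [Matrix.transpose_mul, Matrix.transpose_mul, Matrix.transpose_transpose, Amat_transpose,
    ← Matrix.mul_assoc]

lemma Gset_cols (h2 : (2:F) ≠ 0) {q : ℕ} {g : Matrix (Fin (2*m)) (Fin (2*m)) F}
    (hg : g ∈ Gset F m q) : gᵀ * Amat F m * g = Amat F m := by
  have hrows := Gset_rows h2 hg
  have h1 : g * (Amat F m * gᵀ * Amat F m) = 1 := by
    calc g * (Amat F m * gᵀ * Amat F m) = (g * Amat F m * gᵀ) * Amat F m := by noncomm_ring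
      _ = Amat F m * Amat F m := by rw [hrows]
      _ = 1 := Amat_mul_Amat
  have h1' : (Amat F m * gᵀ * Amat F m) * g = 1 := mul_eq_one_comm.mp h1
  have hA : Amat F m * (Amat F m * gᵀ * Amat F m * g) = Amat F m * 1 := by rw [h1']
  rw [mul_one] at hA
  calc gᵀ * Amat F m * g = Amat F m * (Amat F m * gᵀ * Amat F m * g) := by
        rw [show Amat F m * (Amat F m * gᵀ * Amat F m * g)
            = (Amat F m * Amat F m) * gᵀ * Amat F m * g from by noncomm_ring,
          Amat_mul_Amat, one_mul]
    _ = Amat F m := hA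

lemma Gset_of_cols {q : ℕ} (h2 : (2:F) ≠ 0) {g : Matrix (Fin (2*m)) (Fin (2*m)) F}
    (h : gᵀ * Amat F m * g = Amat F m) : g ∈ Gset F m q := by
  have h1 : (Amat F m * gᵀ * Amat F m) * g = 1 := by
    calc (Amat F m * gᵀ * Amat F m) * g = Amat F m * (gᵀ * Amat F m * g) := by noncomm_ring
      _ = Amat F m * Amat F m := by rw [h]
      _ = 1 := Amat_mul_Amat
  have h1' : g * (Amat F m * gᵀ * Amat F m) = 1 := mul_eq_one_comm.mp h1
  have hrows : g * Amat F m * gᵀ = Amat F m := by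
    have h3 : g * Amat F m * gᵀ * (Amat F m * Amat F m) = Amat F m := by
      calc g * Amat F m * gᵀ * (Amat F m * Amat F m)
          = (g * (Amat F m * gᵀ * Amat F m)) * Amat F m := by noncomm_ring
        _ = Amat F m := by rw [h1', one_mul]
    rwa [Amat_mul_Amat, mul_one] at h3
  refine ⟨⟨⟨g, Amat F m * gᵀ * Amat F m, h1', h1⟩, rfl⟩, ?_⟩
  rw [xi_zero_eq h2, _root_.map_mul, act_C, act_Phi, hrows]

lemma Bf_cols (g : Matrix (Fin (2*m)) (Fin (2*m)) F) (k l : Fin (2*m)) :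
    (gᵀ * Amat F m * g) k l = Bf (fun a => g a k) (fun a => g a l) := by
  rw [Matrix.mul_assoc, Matrix.mul_apply]
  unfold Bf
  refine Finset.sum_congr rfl fun a _ => ?_
  rw [Matrix.transpose_apply]
  congr 1
  rw [Matrix.mul_apply]
  simp only [Amat_apply, ite_mul, one_mul, zero_mul]
  rw [Finset.sum_ite_eq' univ (bbar m a) (fun b => g b l)]
  simp

end Quadratic

section Orbits

lemma bbar_inj {a b : Fin (2*m)} (h : bbar m a = bbar m b) : a = b := by
  have := congrArg (bbar m) h
  rwa [bbar_bbar, bbar_bbar] at this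

lemma Bf_ite_left (b : Fin (2*m)) (t : F) (w : Fin (2*m) → F) :
    Bf (fun a => if a = b then t else 0) w = t * w (bbar m b) := by
  unfold Bf
  simp only [ite_mul, zero_mul]
  rw [Finset.sum_ite_eq' univ b (fun a => t * w (bbar m a))]
  simp

lemma Bf_ite_right (u : Fin (2*m) → F) (b : Fin (2*m)) (t : F) :
    Bf u (fun a => if a = b then t else 0) = u (bbar m b) * t := by
  unfold Bf
  have h : ∀ a : Fin (2*m), (if bbar m a = b then t else (0:F)) = if a = bbar m b then t else 0 := by
    intro a
    by_cases hh : a = bbar m b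
    · rw [if_pos hh, if_pos (by rw [hh, bbar_bbar])]
    · rw [if_neg hh, if_neg (fun hc => hh (by rw [← hc, bbar_bbar]))]
  simp only [h, mul_ite, mul_zero]
  rw [Finset.sum_ite_eq' univ (bbar m b) (fun a => u a * t)]
  simp

lemma Bf_add_left (u1 u2 w : Fin (2*m) → F) :
    Bf (fun a => u1 a + u2 a) w = Bf u1 w + Bf u2 w := by
  unfold Bf
  rw [← Finset.sum_add_distrib]
  exact Finset.sum_congr rfl fun a _ => add_mul _ _ _

lemma Bf_add_right (u w1 w2 : Fin (2*m) → F) :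
    Bf u (fun a => w1 a + w2 a) = Bf u w1 + Bf u w2 := by
  unfold Bf
  rw [← Finset.sum_add_distrib]
  exact Finset.sum_congr rfl fun a _ => mul_add _ _ _

lemma Bf_smul_smul (s t : F) (u w : Fin (2*m) → F) :
    Bf (s • u) (t • w) = s * t * Bf u w := by
  unfold Bf
  rw [Finset.mul_sum]
  refine Finset.sum_congr rfl fun a _ => ?_
  simp only [Pi.smul_apply, smul_eq_mul]
  ring

/-- monic isotropic vectors with leading index `c`. -/
def MonIso (F : Type) [Field F] [Fintype F] (m : ℕ) (c : Fin (2*m)) : Set (Fin (2*m) → F) :=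
  {v | v c = 1 ∧ (∀ a, c < a → v a = 0) ∧ Bf v v = 0}

noncomputable def leadIdx (hm : 0 < m) (v : Fin (2*m) → F) : Fin (2*m) :=
  if h : (Finset.univ.filter (fun a => v a ≠ 0)).Nonempty then Finset.max' _ h else ⟨0, by omega⟩

lemma leadIdx_spec (hm : 0 < m) {v : Fin (2*m) → F} (hv : v ≠ 0) :
    v (leadIdx hm v) ≠ 0 := by
  obtain ⟨a, ha⟩ := Function.ne_iff.mp hv
  have ha' : v a ≠ 0 := ha
  have hne : (Finset.univ.filter (fun a => v a ≠ 0)).Nonempty :=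
    ⟨a, Finset.mem_filter.mpr ⟨Finset.mem_univ a, ha'⟩⟩
  rw [leadIdx, dif_pos hne]
  exact (Finset.mem_filter.mp (Finset.max'_mem _ hne)).2

lemma le_leadIdx (hm : 0 < m) {v : Fin (2*m) → F} {a : Fin (2*m)} (ha : v a ≠ 0) :
    a ≤ leadIdx hm v := by
  have hne : (Finset.univ.filter (fun b => v b ≠ 0)).Nonempty :=
    ⟨a, Finset.mem_filter.mpr ⟨Finset.mem_univ a, ha⟩⟩
  rw [leadIdx, dif_pos hne]
  exact Finset.le_max' _ a (Finset.mem_filter.mpr ⟨Finset.mem_univ a, ha⟩)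

lemma leadIdx_gt (hm : 0 < m) {v : Fin (2*m) → F} {a : Fin (2*m)}
    (ha : leadIdx hm v < a) : v a = 0 := by
  by_contra h
  exact absurd (le_leadIdx hm h) (not_le.mpr ha)

lemma leadIdx_smul (hm : 0 < m) (v : Fin (2*m) → F) {t : F} (ht : t ≠ 0) :
    leadIdx hm (t • v) = leadIdx hm v := by
  have hset : (Finset.univ.filter fun a => (t • v) a ≠ 0)
      = Finset.univ.filter fun a => v a ≠ 0 := by
    apply Finset.ext
    intro a
    simp [Finset.mem_filter, Pi.smul_apply, smul_eq_mul, ht]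
  rw [leadIdx, leadIdx, hset]

lemma monIso_ne_zero {c : Fin (2*m)} {v : Fin (2*m) → F} (h : v ∈ MonIso F m c) : v ≠ 0 := by
  intro h0
  have h1 := h.1
  rw [h0] at h1
  simp at h1

lemma leadIdx_monIso (hm : 0 < m) {c : Fin (2*m)} {v : Fin (2*m) → F}
    (h : v ∈ MonIso F m c) : leadIdx hm v = c := by
  refine le_antisymm ?_ (le_leadIdx hm (by rw [h.1]; exact one_ne_zero))
  by_contra hlt
  push_neg at hlt
  exact leadIdx_spec hm (monIso_ne_zero h) (h.2.1 _ hlt)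

lemma monIso_of (hm : 0 < m) {v : Fin (2*m) → F} (hv : v ≠ 0) (hiso : Bf v v = 0)
    (hmon : v (leadIdx hm v) = 1) : v ∈ MonIso F m (leadIdx hm v) :=
  ⟨hmon, fun a ha => leadIdx_gt hm ha, hiso⟩

/-- the explicit orthogonal unipotent matrix with `c`-th column `v`. -/
def conmat (c : Fin (2*m)) (v : Fin (2*m) → F) : Matrix (Fin (2*m)) (Fin (2*m)) F :=
  Matrix.of fun a k =>
    if k = c then v a
    else if a = k then 1
    else if a = bbar m c ∧ k ≠ bbar m c then -(v (bbar m k)) else 0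

lemma conmat_col_c (c : Fin (2*m)) (v : Fin (2*m) → F) :
    (fun a => conmat c v a c) = v :=
  funext fun a => if_pos rfl

lemma conmat_col_bc (c : Fin (2*m)) (v : Fin (2*m) → F) :
    (fun a => conmat c v a (bbar m c)) = fun a => if a = bbar m c then (1:F) else 0 := by
  funext a
  show (if bbar m c = c then v a else if a = bbar m c then 1
      else if a = bbar m c ∧ bbar m c ≠ bbar m c then -(v (bbar m (bbar m c))) else 0) = _
  rw [if_neg (bbar_ne c)]
  by_cases h : a = bbar m c
  · rw [if_pos h, if_pos h]
  · rw [if_neg h, if_neg (fun hh => hh.2 rfl), if_neg h]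

lemma conmat_col_other (c : Fin (2*m)) (v : Fin (2*m) → F) {k : Fin (2*m)}
    (hk1 : k ≠ c) (hk2 : k ≠ bbar m c) :
    (fun a => conmat c v a k)
      = fun a => (if a = k then (1:F) else 0) + (if a = bbar m c then -(v (bbar m k)) else 0) := by
  funext a
  show (if k = c then v a else if a = k then 1
      else if a = bbar m c ∧ k ≠ bbar m c then -(v (bbar m k)) else 0) = _
  rw [if_neg hk1]
  by_cases h : a = k
  · rw [if_pos h, if_pos h, if_neg (fun hh => hk2 (h.symm.trans hh)), add_zero]
  · rw [if_neg h, if_neg h]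
    by_cases h2 : a = bbar m c
    · rw [if_pos ⟨h2, hk2⟩, if_pos h2, zero_add]
    · rw [if_neg (fun hh => h2 hh.1), if_neg h2, add_zero]

lemma Bf_col_other_left {c : Fin (2*m)} {v : Fin (2*m) → F} {k : Fin (2*m)}
    (hk1 : k ≠ c) (hk2 : k ≠ bbar m c) (w : Fin (2*m) → F) :
    Bf (fun a => conmat c v a k) w = w (bbar m k) - v (bbar m k) * w c := by
  rw [conmat_col_other c v hk1 hk2, Bf_add_left, Bf_ite_left, Bf_ite_left, one_mul, bbar_bbar]
  ring

lemma conmat_app_c (c : Fin (2*m)) (v : Fin (2*m) → F) (a : Fin (2*m)) :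
    conmat c v a c = v a := if_pos rfl

lemma conmat_app_bc (c : Fin (2*m)) (v : Fin (2*m) → F) (a : Fin (2*m)) :
    conmat c v a (bbar m c) = if a = bbar m c then (1:F) else 0 :=
  congrFun (conmat_col_bc c v) a

lemma conmat_app_other (c : Fin (2*m)) (v : Fin (2*m) → F) {k : Fin (2*m)}
    (hk1 : k ≠ c) (hk2 : k ≠ bbar m c) (a : Fin (2*m)) :
    conmat c v a k
      = (if a = k then (1:F) else 0) + (if a = bbar m c then -(v (bbar m k)) else 0) :=
  congrFun (conmat_col_other c v hk1 hk2) a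

lemma conmat_cols {c : Fin (2*m)} {v : Fin (2*m) → F} (hv : v ∈ MonIso F m c) :
    (conmat c v)ᵀ * Amat F m * conmat c v = Amat F m := by
  obtain ⟨hv1, hv2, hv3⟩ := hv
  ext k l
  rw [Bf_cols, Amat_apply]
  by_cases hk : k = c
  · rw [hk, conmat_col_c]
    by_cases hl : l = c
    · rw [hl, conmat_col_c, hv3, if_neg (fun h : c = bbar m c => bbar_ne c h.symm)]
    · by_cases hl2 : l = bbar m c
      · rw [hl2, conmat_col_bc, Bf_ite_right, bbar_bbar, hv1, one_mul, if_pos rfl]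
      · rw [conmat_col_other c v hl hl2, Bf_add_right, Bf_ite_right, Bf_ite_right,
          bbar_bbar, hv1, if_neg hl2]
        ring
  · by_cases hk2 : k = bbar m c
    · rw [hk2, conmat_col_bc, Bf_ite_left, one_mul, bbar_bbar]
      by_cases hl : l = c
      · rw [hl, conmat_app_c, hv1, if_pos rfl]
      · rw [if_neg (fun h : l = c => hl h)]
        by_cases hl2 : l = bbar m c
        · rw [hl2, conmat_app_bc, if_neg (fun h : c = bbar m c => bbar_ne c h.symm)]
        · rw [conmat_app_other c v hl hl2, if_neg (fun h : c = l => hl h.symm),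
            if_neg (fun h : c = bbar m c => bbar_ne c h.symm), add_zero]
    · rw [Bf_col_other_left hk hk2]
      by_cases hl : l = c
      · rw [hl, conmat_app_c, conmat_app_c, hv1, mul_one, sub_self,
          if_neg (fun h : c = bbar m k => hk2 (bbar_eq_iff.mp h.symm))]
      · by_cases hl2 : l = bbar m c
        · rw [hl2, conmat_app_bc, conmat_app_bc,
            if_neg (fun h : bbar m k = bbar m c => hk (bbar_inj h)),
            if_neg (fun h : c = bbar m c => bbar_ne c h.symm), mul_zero, sub_zero,
            if_neg (fun h : bbar m c = bbar m k => hk (bbar_inj h.symm))]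
        · rw [conmat_app_other c v hl hl2, conmat_app_other c v hl hl2,
            if_neg (fun h : bbar m k = bbar m c => hk (bbar_inj h)), add_zero,
            if_neg (fun h : c = l => hl h.symm),
            if_neg (fun h : c = bbar m c => bbar_ne c h.symm), add_zero, mul_zero, sub_zero]
          by_cases hlk : l = bbar m k
          · rw [if_pos hlk.symm, if_pos hlk]
          · rw [if_neg (fun h : bbar m k = l => hlk h.symm), if_neg hlk]

lemma conmat_tri {c : Fin (2*m)} {v : Fin (2*m) → F} (hv : v ∈ MonIso F m c) :
    ∀ i j : Fin (2*m), j < i → conmat c v i j = 0 := by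
  intro i j hji
  show (if j = c then v i else if i = j then 1
      else if i = bbar m c ∧ j ≠ bbar m c then -(v (bbar m j)) else 0) = 0
  by_cases hjc : j = c
  · rw [if_pos hjc]
    exact hv.2.1 i (hjc ▸ hji)
  · rw [if_neg hjc, if_neg (fun h : i = j => absurd hji (by rw [h]; exact lt_irrefl j))]
    by_cases hcond : i = bbar m c ∧ j ≠ bbar m c
    · rw [if_pos hcond]
      have hj : c < bbar m j := by
        have h1 : (j : ℕ) < (bbar m c : ℕ) := by rw [← hcond.1]; exact hji
        have h2 := j.isLt
        have h3 := c.isLt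
        have : (c : ℕ) < (bbar m j : ℕ) := by
          simp only [bbar] at h1 ⊢
          omega
        exact this
      rw [hv.2.1 _ hj, neg_zero]
    · rw [if_neg hcond]

lemma conmat_diag {c : Fin (2*m)} {v : Fin (2*m) → F} (hv : v ∈ MonIso F m c) :
    ∀ i, conmat c v i i = 1 := by
  intro i
  show (if i = c then v i else if i = i then 1
      else if i = bbar m c ∧ i ≠ bbar m c then -(v (bbar m i)) else 0) = 1
  by_cases hic : i = c
  · rw [if_pos hic, hic, hv.1]
  · rw [if_neg hic, if_pos rfl]

lemma conmat_act (c : Fin (2*m)) (v : Fin (2*m) → F) :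
    act F m (conmat c v) (MvPolynomial.X c) = linform v := by
  rw [act_X]
  exact congrArg linform (conmat_col_c c v)

lemma orbit_eq (h2 : (2:F) ≠ 0) (q : ℕ) (c : Fin (2*m)) :
    {w | ∃ g ∈ Pset F m q, act F m g (MvPolynomial.X c) = w}
      = linform '' (MonIso F m c) := by
  ext w
  constructor
  · rintro ⟨g, ⟨hgG, htri, hdiag⟩, rfl⟩
    refine ⟨fun a => g a c, ⟨hdiag c, fun a ha => htri a c ha, ?_⟩, (act_X g c).symm⟩
    have h := congrFun (congrFun (Gset_cols h2 hgG) c) c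
    rw [Bf_cols] at h
    rw [h, Amat_apply, if_neg (fun hh => bbar_ne c hh.symm)]
  · rintro ⟨v, hv, rfl⟩
    exact ⟨conmat c v, ⟨Gset_of_cols h2 (conmat_cols hv), conmat_tri hv, conmat_diag hv⟩,
      conmat_act c v⟩

noncomputable def MonIsoF (F : Type) [Field F] [Fintype F] (m : ℕ) (c : Fin (2*m)) :
    Finset (Fin (2*m) → F) := (Set.toFinite (MonIso F m c)).toFinset

noncomputable def MIallF (F : Type) [Field F] [Fintype F] (m : ℕ) :
    Finset (Fin (2*m) → F) := (Set.toFinite {v | ∃ c, v ∈ MonIso F m c}).toFinset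

lemma Norb_eq (h2 : (2:F) ≠ 0) (q : ℕ) (c : Fin (2*m)) :
    Norb F m q (MvPolynomial.X c) = ∏ v ∈ MonIsoF F m c, linform v := by
  rw [Norb, orbit_eq h2 q c, finprod_mem_image (linform_inj.injOn),
    finprod_mem_eq_finite_toFinset_prod _ (Set.toFinite _)]
  rfl

lemma prod_split {β : Type} [CommMonoid β] (f : Fin (2*m) → β) :
    ∏ k, f k = (∏ j : Fin m, f (yvar m j)) * ∏ j : Fin m, f (xvar m j) := by
  have hbij : Function.Bijective (Sum.elim (yvar m) (xvar m)) := by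
    constructor
    · rintro (j | j) (j' | j') h <;>
        (first
          | (have hv := congrArg Fin.val h
             have h1 := j.isLt
             have h2 := j'.isLt
             simp only [Sum.elim_inl, Sum.elim_inr, yvar, xvar] at hv
             first
               | (congr 1; exact Fin.ext (by omega))
               | omega))
    · intro c
      by_cases h : (c : ℕ) < m
      · exact ⟨Sum.inl ⟨c, h⟩, Fin.ext rfl⟩
      · refine ⟨Sum.inr ⟨2*m - 1 - c, by have := c.isLt; omega⟩, Fin.ext ?_⟩
        have := c.isLt
        simp only [Sum.elim_inr, xvar]
        omega
  have hkey := Fintype.prod_bijective _ hbij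
    (fun s => f (Sum.elim (yvar m) (xvar m) s)) f (fun s => rfl)
  rw [← hkey, Fintype.prod_sum_type]
  rfl

lemma uPoly_eq (hm : 0 < m) (h2 : (2:F) ≠ 0) (q : ℕ) :
    uPoly F m q = ∏ v ∈ MIallF F m, linform v := by
  rw [uPoly]
  rw [Finset.prod_congr rfl (fun j (_ : j ∈ univ) => by
    rw [Norb_eq h2 q (yvar m j), Norb_eq h2 q (xvar m j)] :
    ∀ j ∈ univ, Norb F m q (MvPolynomial.X (yvar m j)) * Norb F m q (MvPolynomial.X (xvar m j))
      = (∏ v ∈ MonIsoF F m (yvar m j), linform v) * ∏ v ∈ MonIsoF F m (xvar m j), linform v)]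
  rw [Finset.prod_mul_distrib,
    ← prod_split (β := MvPolynomial (Fin (2*m)) F) (f := fun c => ∏ v ∈ MonIsoF F m c, linform v),
    ← Finset.prod_sigma univ (fun c => MonIsoF F m c) (fun x => linform x.2)]
  refine Finset.prod_bij (fun x _ => x.2) ?_ ?_ ?_ (fun x hx => rfl)
  · intro x hx
    rw [Finset.mem_sigma] at hx
    rw [MIallF, Set.Finite.mem_toFinset]
    exact ⟨x.1, (Set.Finite.mem_toFinset _).mp hx.2⟩
  · intro x1 hx1 x2 hx2 heq
    rw [Finset.mem_sigma] at hx1 hx2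
    obtain ⟨c1, v1⟩ := x1
    obtain ⟨c2, v2⟩ := x2
    dsimp only at heq
    subst heq
    have hm1 : v1 ∈ MonIso F m c1 := (Set.Finite.mem_toFinset _).mp hx1.2
    have hm2 : v1 ∈ MonIso F m c2 := (Set.Finite.mem_toFinset _).mp hx2.2
    have hc : c1 = c2 := by rw [← leadIdx_monIso hm hm1, ← leadIdx_monIso hm hm2]
    subst hc
    rfl
  · intro v hvmem
    rw [MIallF, Set.Finite.mem_toFinset] at hvmem
    obtain ⟨c, hc⟩ := hvmem
    exact ⟨⟨c, v⟩, Finset.mem_sigma.mpr ⟨Finset.mem_univ c, (Set.Finite.mem_toFinset _).mpr hc⟩, rfl⟩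

end Orbits

section GroupAction

lemma MIall_iff (hm : 0 < m) {v : Fin (2*m) → F} :
    (∃ c, v ∈ MonIso F m c) ↔ v ≠ 0 ∧ Bf v v = 0 ∧ v (leadIdx hm v) = 1 := by
  constructor
  · rintro ⟨c, hc⟩
    exact ⟨monIso_ne_zero hc, hc.2.2, by rw [leadIdx_monIso hm hc]; exact hc.1⟩
  · rintro ⟨h0, hiso, hmon⟩
    exact ⟨leadIdx hm v, monIso_of hm h0 hiso hmon⟩

lemma Gset_inv {q : ℕ} {g : Matrix (Fin (2*m)) (Fin (2*m)) F} (hg : g ∈ Gset F m q) :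
    ∃ B : Matrix (Fin (2*m)) (Fin (2*m)) F, B * g = 1 ∧ g * B = 1 ∧ B ∈ Gset F m q := by
  have hdet : IsUnit g.det := (Matrix.isUnit_iff_isUnit_det g).mp hg.1
  have hinv1 : g⁻¹ * g = 1 := Matrix.nonsing_inv_mul g hdet
  have hinv2 : g * g⁻¹ = 1 := Matrix.mul_nonsing_inv g hdet
  refine ⟨g⁻¹, hinv1, hinv2, ⟨⟨g⁻¹, g, hinv1, hinv2⟩, rfl⟩, ?_⟩
  calc act F m g⁻¹ (xi F m q 0)
      = act F m g⁻¹ (act F m g (xi F m q 0)) := by rw [hg.2]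
    _ = act F m (g⁻¹ * g) (xi F m q 0) := act_act _ _ _
    _ = xi F m q 0 := by rw [hinv1, act_one]

/-- the normalized image of `v` under `g`. -/
noncomputable def mimg (hm : 0 < m) (g : Matrix (Fin (2*m)) (Fin (2*m)) F)
    (v : Fin (2*m) → F) : Fin (2*m) → F :=
  (g.mulVec v (leadIdx hm (g.mulVec v)))⁻¹ • g.mulVec v

lemma mulVec_ne_zero {g B : Matrix (Fin (2*m)) (Fin (2*m)) F} (hBg : B * g = 1)
    {v : Fin (2*m) → F} (hv : v ≠ 0) : g.mulVec v ≠ 0 := by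
  intro h0
  apply hv
  have h : B.mulVec (g.mulVec v) = v := by
    rw [Matrix.mulVec_mulVec, hBg, Matrix.one_mulVec]
  rw [← h, h0, Matrix.mulVec_zero]

lemma Bf_mulVec (h2 : (2:F) ≠ 0) {q : ℕ} {g : Matrix (Fin (2*m)) (Fin (2*m)) F}
    (hg : g ∈ Gset F m q) (u w : Fin (2*m) → F) :
    Bf (g.mulVec u) (g.mulVec w) = Bf u w := by
  have hcols := Gset_cols h2 hg
  have hmv : g.mulVec u = Matrix.vecMul u gᵀ := by
    conv_lhs => rw [← Matrix.transpose_transpose g]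
    exact Matrix.mulVec_transpose gᵀ u
  rw [Bf_eq_dot, Bf_eq_dot, Matrix.mulVec_mulVec, hmv, Matrix.dotProduct_mulVec,
    Matrix.vecMul_vecMul, ← Matrix.mul_assoc, hcols, ← Matrix.dotProduct_mulVec]

lemma mimg_mem (hm : 0 < m) (h2 : (2:F) ≠ 0) {q : ℕ}
    {g : Matrix (Fin (2*m)) (Fin (2*m)) F} (hg : g ∈ Gset F m q)
    {v : Fin (2*m) → F} (hv : ∃ c, v ∈ MonIso F m c) :
    (∃ c, mimg hm g v ∈ MonIso F m c)
      ∧ g.mulVec v = (g.mulVec v (leadIdx hm (g.mulVec v))) • mimg hm g v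
      ∧ g.mulVec v (leadIdx hm (g.mulVec v)) ≠ 0 := by
  obtain ⟨hv0, hviso, hvmon⟩ := (MIall_iff hm).mp hv
  obtain ⟨B, hBg, hgB, hB⟩ := Gset_inv hg
  have hw0 : g.mulVec v ≠ 0 := mulVec_ne_zero hBg hv0
  have hs0 : g.mulVec v (leadIdx hm (g.mulVec v)) ≠ 0 := leadIdx_spec hm hw0
  have hmieq : mimg hm g v = (g.mulVec v (leadIdx hm (g.mulVec v)))⁻¹ • g.mulVec v := rfl
  refine ⟨?_, (smul_inv_smul₀ hs0 (g.mulVec v)).symm, hs0⟩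
  rw [MIall_iff hm]
  refine ⟨hmieq ▸ smul_ne_zero (inv_ne_zero hs0) hw0, ?_, ?_⟩
  · rw [hmieq, Bf_smul_smul, Bf_mulVec h2 hg, hviso, mul_zero]
  · rw [hmieq, leadIdx_smul hm (g.mulVec v) (inv_ne_zero hs0), Pi.smul_apply, smul_eq_mul,
      inv_mul_cancel₀ hs0]

lemma mimg_mimg (hm : 0 < m) (h2 : (2:F) ≠ 0) {q : ℕ}
    {g B : Matrix (Fin (2*m)) (Fin (2*m)) F} (hg : g ∈ Gset F m q) (hB : B ∈ Gset F m q)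
    (hBg : B * g = 1) {v : Fin (2*m) → F} (hv : ∃ c, v ∈ MonIso F m c) :
    mimg hm B (mimg hm g v) = v := by
  obtain ⟨hv0, hviso, hvmon⟩ := (MIall_iff hm).mp hv
  have hw0 : g.mulVec v ≠ 0 := mulVec_ne_zero hBg hv0
  have hs0 : g.mulVec v (leadIdx hm (g.mulVec v)) ≠ 0 := leadIdx_spec hm hw0
  have hBv : B.mulVec (mimg hm g v) = (g.mulVec v (leadIdx hm (g.mulVec v)))⁻¹ • v := by
    show B.mulVec ((g.mulVec v (leadIdx hm (g.mulVec v)))⁻¹ • g.mulVec v) = _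
    rw [Matrix.mulVec_smul, Matrix.mulVec_mulVec, hBg, Matrix.one_mulVec]
  show (B.mulVec (mimg hm g v) (leadIdx hm (B.mulVec (mimg hm g v))))⁻¹
      • B.mulVec (mimg hm g v) = v
  rw [hBv, leadIdx_smul hm v (inv_ne_zero hs0), Pi.smul_apply, smul_eq_mul, hvmon,
    mul_one, inv_inv, smul_smul, mul_inv_cancel₀ hs0, one_smul]

lemma act_uPoly (hm : 0 < m) (h2 : (2:F) ≠ 0) {q : ℕ}
    {g : Matrix (Fin (2*m)) (Fin (2*m)) F} (hg : g ∈ Gset F m q) :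
    ∃ s : F, s ≠ 0 ∧ act F m g (uPoly F m q) = MvPolynomial.C s * uPoly F m q := by
  obtain ⟨B, hBg, hgB, hB⟩ := Gset_inv hg
  refine ⟨∏ v ∈ MIallF F m, g.mulVec v (leadIdx hm (g.mulVec v)), ?_, ?_⟩
  · rw [Finset.prod_ne_zero_iff]
    intro v hvmem
    have hv : ∃ c, v ∈ MonIso F m c := by rwa [MIallF, Set.Finite.mem_toFinset] at hvmem
    exact (mimg_mem hm h2 hg hv).2.2
  · rw [uPoly_eq hm h2 q, map_prod]
    have hterm : ∀ v ∈ MIallF F m, act F m g (linform v)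
        = MvPolynomial.C (g.mulVec v (leadIdx hm (g.mulVec v))) * linform (mimg hm g v) := by
      intro v hvmem
      have hv : ∃ c, v ∈ MonIso F m c := by rwa [MIallF, Set.Finite.mem_toFinset] at hvmem
      rw [act_linform]
      conv_lhs => rw [(mimg_mem hm h2 hg hv).2.1]
      rw [linform_smul]
    have hCprod : (∏ v ∈ MIallF F m, MvPolynomial.C (g.mulVec v (leadIdx hm (g.mulVec v))))
        = MvPolynomial.C (∏ v ∈ MIallF F m, (g.mulVec v (leadIdx hm (g.mulVec v)))) :=
      (map_prod (MvPolynomial.C : F →+* MvPolynomial (Fin (2*m)) F) _ _).symm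
    rw [Finset.prod_congr rfl hterm, Finset.prod_mul_distrib, hCprod]
    congr 1
    refine Finset.prod_nbij' (mimg hm g) (mimg hm B) ?_ ?_ ?_ ?_ (fun a _ => rfl)
    · intro v hvmem
      have hv : ∃ c, v ∈ MonIso F m c := by rwa [MIallF, Set.Finite.mem_toFinset] at hvmem
      rw [MIallF, Set.Finite.mem_toFinset]
      exact (mimg_mem hm h2 hg hv).1
    · intro v hvmem
      have hv : ∃ c, v ∈ MonIso F m c := by rwa [MIallF, Set.Finite.mem_toFinset] at hvmem
      rw [MIallF, Set.Finite.mem_toFinset]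
      exact (mimg_mem hm h2 hB hv).1
    · intro v hvmem
      have hv : ∃ c, v ∈ MonIso F m c := by rwa [MIallF, Set.Finite.mem_toFinset] at hvmem
      exact mimg_mimg hm h2 hg hB hBg hv
    · intro v hvmem
      have hv : ∃ c, v ∈ MonIso F m c := by rwa [MIallF, Set.Finite.mem_toFinset] at hvmem
      exact mimg_mimg hm h2 hB hg hgB hv

lemma uPoly_ne_zero (hm : 0 < m) (h2 : (2:F) ≠ 0) (q : ℕ) : uPoly F m q ≠ 0 := by
  rw [uPoly_eq hm h2 q, Finset.prod_ne_zero_iff]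
  intro v hvmem
  have hv : ∃ c, v ∈ MonIso F m c := by rwa [MIallF, Set.Finite.mem_toFinset] at hvmem
  exact linform_ne_zero ((MIall_iff hm).mp hv).1

end GroupAction

end Aux


variable (F : Type) [Field F] [Fintype F]

/-- `u_m` divides `𝒫^{e(i,m)}(u_m)` and any quotient `d` is `G`-invariant. -/
theorem statement_5
    (p : ℕ) (hp : p.Prime) (hodd : Odd p)
    [CharP F p]
    (q : ℕ) (hq : q = Fintype.card F)
    (m : ℕ) (hm : 1 ≤ m)
    (i : ℕ) (hi1 : 1 ≤ i) (hi2 : i ≤ m) :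
    uPoly F m q ∣ sP F m q (eExp m q i) (uPoly F m q) ∧
    ∀ d : MvPolynomial (Fin (2*m)) F,
      uPoly F m q * d = sP F m q (eExp m q i) (uPoly F m q) →
      ∀ g ∈ Gset F m q, act F m g d = d := by
  have hm0 : 0 < m := hm
  have h2 : (2:F) ≠ 0 := by
    intro h
    have hcast : ((2:ℕ):F) = (2:F) := by norm_num
    have hdvd : p ∣ 2 := (CharP.cast_eq_zero_iff F p 2).mp (by rw [hcast]; exact h)
    have hp2 : p = 2 := (Nat.prime_dvd_prime_iff_eq hp Nat.prime_two).mp hdvd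
    rw [hp2] at hodd
    exact (Nat.not_odd_iff_even.mpr even_two) hodd
  constructor
  · exact good_uPoly p hp q hq (eExp m q i)
  · intro d hd g hg
    obtain ⟨s, hs0, hact⟩ := act_uPoly hm0 h2 hg
    have hkey : act F m g (sP F m q (eExp m q i) (uPoly F m q))
        = MvPolynomial.C s * sP F m q (eExp m q i) (uPoly F m q) := by
      simp only [sP]
      calc act F m g ((steenrod F m q (uPoly F m q)).coeff (eExp m q i))
          = (Polynomial.map (act F m g).toRingHom (steenrod F m q (uPoly F m q))).coeff
              (eExp m q i) := (Polynomial.coeff_map _ _).symm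
        _ = (steenrod F m q (act F m g (uPoly F m q))).coeff (eExp m q i) := by
            rw [steenrod_act p hp q hq]
        _ = (steenrod F m q (MvPolynomial.C s * uPoly F m q)).coeff (eExp m q i) := by
            rw [hact]
        _ = (Polynomial.C (MvPolynomial.C s) * steenrod F m q (uPoly F m q)).coeff
              (eExp m q i) := by rw [_root_.map_mul, steenrod_C]
        _ = MvPolynomial.C s * (steenrod F m q (uPoly F m q)).coeff (eExp m q i) :=
            Polynomial.coeff_C_mul _
    have heq := congrArg (act F m g) hd
    rw [_root_.map_mul, hact, hkey, ← hd] at heq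
    have hCs : (MvPolynomial.C s : MvPolynomial (Fin (2*m)) F) ≠ 0 := by
      rw [Ne, MvPolynomial.C_eq_zero]
      exact hs0
    have hne : MvPolynomial.C s * uPoly F m q ≠ 0 :=
      mul_ne_zero hCs (uPoly_ne_zero hm0 h2 q)
    apply mul_left_cancel₀ hne
    calc MvPolynomial.C s * uPoly F m q * act F m g d
        = MvPolynomial.C s * (uPoly F m q * d) := heq
      _ = MvPolynomial.C s * uPoly F m q * d := by ring
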